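/- Let (Ω, 𝓕, μ) be a probability space with filtration 𝓕_0 ⊆ … ⊆ 𝓕_n ⊆ 𝓕 and let k ≥ 1. For each j ∈ {1, …, k} and t = 1, …, n, let g^j_t : Ω → ℝ be 𝓕_t-measurable with |g^j_t| ≤ 1 almost surely and E[g^j_t | 𝓕_{t−1}] = 0 almost surely, and let w^j_t : Ω → {0,1} be 𝓕_{t−1}-measurable. Write S^j = Σ_{t=1}^n w^j_t and T^j = Σ_{t=1}^n w^j_t g^j_t. Let I : Ω → {1, …, k} be any measurable random index. Then for every α > 0 and every integer m ≥ 1, μ({ |T^I| > α S^I } ∩ { S^I ≥ m }) ≤ 2k · exp(−m α² / 2) / (1 − exp(−α² / 2)). -/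

import Mathlib

open MeasureTheory Finset

/-- One-sided weighted Azuma bound for a single bounded martingale difference
sequence with predictable `{0,1}` weights. -/
lemma aux_one_sided
    {Ω : Type*} [m0 : MeasurableSpace Ω] (μ : Measure Ω) [IsProbabilityMeasure μ]
    (ℱ : Filtration ℕ m0) (n : ℕ)
    (g w : ℕ → Ω → ℝ)
    (hgmeas : ∀ t ∈ Icc 1 n, Measurable[ℱ t] (g t))
    (hgbdd : ∀ t ∈ Icc 1 n, ∀ᵐ ω ∂μ, |g t ω| ≤ 1)
    (hgmart : ∀ t ∈ Icc 1 n, μ[g t|ℱ (t - 1)] =ᵐ[μ] 0)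
    (hw01 : ∀ t ∈ Icc 1 n, ∀ ω, w t ω = 0 ∨ w t ω = 1)
    (hwmeas : ∀ t ∈ Icc 1 n, Measurable[ℱ (t - 1)] (w t))
    (α : ℝ) (hα : 0 < α) (m : ℕ) :
    μ ({ω | α * (∑ t ∈ Icc 1 n, w t ω) < ∑ t ∈ Icc 1 n, w t ω * g t ω} ∩
       {ω | (m : ℝ) ≤ ∑ t ∈ Icc 1 n, w t ω}) ≤
      ENNReal.ofReal (Real.exp (-(m : ℝ) * α ^ 2 / 2)) := by
  classical
  set Z : ℕ → Ω → ℝ :=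
    fun t ω => Real.exp (∑ s ∈ Icc 1 t, (α * w s ω * g s ω - α ^ 2 / 2 * w s ω)) with hZ
  -- measurability of Z t w.r.t. ℱ t for t ≤ n
  have hZmeas : ∀ t, t ≤ n → Measurable[ℱ t] (Z t) := by
    intro t ht
    apply Measurable.exp
    apply Finset.measurable_sum
    intro s hs
    have hs' : s ∈ Icc 1 n := mem_Icc.2 ⟨(mem_Icc.1 hs).1, le_trans (mem_Icc.1 hs).2 ht⟩
    have hst : s ≤ t := (mem_Icc.1 hs).2
    have hwm : Measurable[ℱ t] (w s) :=
      (hwmeas s hs').mono (ℱ.mono (le_trans (Nat.sub_le s 1) hst)) le_rfl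
    have hgm : Measurable[ℱ t] (g s) := (hgmeas s hs').mono (ℱ.mono hst) le_rfl
    exact ((measurable_const.mul hwm).mul hgm).sub (measurable_const.mul hwm)
  -- a.e. bound for g uniformly in s
  have hgb : ∀ᵐ ω ∂μ, ∀ s ∈ (↑(Icc 1 n) : Set ℕ), |g s ω| ≤ 1 :=
    (MeasureTheory.ae_ball_iff ((Icc 1 n : Finset ℕ) : Set ℕ).to_countable).2
      fun s hs => hgbdd s (Finset.mem_coe.1 hs)
  -- a.e. bound on Z t
  have hZbdd : ∀ t, t ≤ n → ∀ᵐ ω ∂μ, ‖Z t ω‖ ≤ Real.exp (α * t) := by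
    intro t ht
    filter_upwards [hgb] with ω hω
    rw [Real.norm_eq_abs, Real.abs_exp]
    apply Real.exp_le_exp.2
    calc ∑ s ∈ Icc 1 t, (α * w s ω * g s ω - α ^ 2 / 2 * w s ω)
        ≤ ∑ s ∈ Icc 1 t, α := by
          apply Finset.sum_le_sum
          intro s hs
          have hs' : s ∈ Icc 1 n := mem_Icc.2 ⟨(mem_Icc.1 hs).1,
            le_trans (mem_Icc.1 hs).2 ht⟩
          have hgω := hω s (Finset.mem_coe.2 hs')
          rcases hw01 s hs' ω with h | h
          · rw [h]; ring_nf; positivity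
          · rw [h]
            have : g s ω ≤ 1 := (abs_le.1 hgω).2
            nlinarith [sq_nonneg α]
      _ = α * t := by
          rw [Finset.sum_const, Nat.card_Icc]
          simp [nsmul_eq_mul, mul_comm]
  have hZint : ∀ t, t ≤ n → Integrable (Z t) μ := by
    intro t ht
    exact (integrable_const (Real.exp (α * t))).mono'
      (((hZmeas t ht).mono (ℱ.le t) le_rfl).aestronglyMeasurable) (hZbdd t ht)
  have hZpos : ∀ t ω, 0 < Z t ω := fun t ω => Real.exp_pos _
  -- main supermartingale estimate
  have hZone : ∀ t, t ≤ n → ∫ ω, Z t ω ∂μ ≤ 1 := by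
    intro t
    induction t with
    | zero =>
      intro _
      simp only [hZ, Icc_self, Icc_eq_empty_of_lt (Nat.zero_lt_one)]
      simp
    | succ t ih =>
      intro h
      have ht' : t ≤ n := Nat.le_of_succ_le h
      have hmem : t + 1 ∈ Icc 1 n := mem_Icc.2 ⟨Nat.succ_le_succ (Nat.zero_le t), h⟩
      set G : Ω → ℝ := g (t + 1) with hG
      set W : Ω → ℝ := w (t + 1) with hW
      set X : Ω → ℝ := fun ω => Real.exp (α * W ω * G ω - α ^ 2 / 2 * W ω) with hXdef
      have hWm : Measurable[ℱ t] W := by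
        have := hwmeas (t + 1) hmem
        simpa using this
      have hGmart : μ[G|ℱ t] =ᵐ[μ] 0 := by
        have := hgmart (t + 1) hmem
        simpa using this
      have hGb : ∀ᵐ ω ∂μ, |G ω| ≤ 1 := hgbdd (t + 1) hmem
      have hGmeas : Measurable G := (hgmeas (t + 1) hmem).mono (ℱ.le _) le_rfl
      have hW01 : ∀ ω, W ω = 0 ∨ W ω = 1 := hw01 (t + 1) hmem
      -- integrability of exp(α G)
      have hexpGmeas : Measurable fun ω => Real.exp (α * G ω) :=
        (measurable_const.mul hGmeas).exp
      have hexpGint : Integrable (fun ω => Real.exp (α * G ω)) μ := by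
        apply (integrable_const (Real.exp α)).mono' hexpGmeas.aestronglyMeasurable
        filter_upwards [hGb] with ω hω
        rw [Real.norm_eq_abs, Real.abs_exp]
        apply Real.exp_le_exp.2
        nlinarith [(abs_le.1 hω).2]
      have hGint : Integrable G μ := by
        apply (integrable_const (1 : ℝ)).mono' hGmeas.aestronglyMeasurable
        filter_upwards [hGb] with ω hω
        simpa using hω
      -- conditional Hoeffding: E[exp(α G)|ℱ t] ≤ exp(α²/2)
      have hcosh : μ[fun ω => Real.exp (α * G ω)|ℱ t] ≤ᵐ[μ]
          fun _ => Real.exp (α ^ 2 / 2) := by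
        have hpt : (fun ω => Real.exp (α * G ω)) ≤ᵐ[μ]
            fun ω => Real.cosh α + Real.sinh α * G ω := by
          filter_upwards [hGb] with ω hω
          have h1 : 0 ≤ (1 - G ω) / 2 := by
            have := (abs_le.1 hω).2; linarith
          have h2 : 0 ≤ (1 + G ω) / 2 := by
            have := (abs_le.1 hω).1; linarith
          have h3 : (1 - G ω) / 2 + (1 + G ω) / 2 = 1 := by ring
          have hc := convexOn_exp.2 (Set.mem_univ (-α)) (Set.mem_univ α) h1 h2 h3
          simp only [smul_eq_mul] at hc
          have harg : (1 - G ω) / 2 * (-α) + (1 + G ω) / 2 * α = α * G ω := by ring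
          rw [harg] at hc
          calc Real.exp (α * G ω)
              ≤ (1 - G ω) / 2 * Real.exp (-α) + (1 + G ω) / 2 * Real.exp α := hc
            _ = Real.cosh α + Real.sinh α * G ω := by
              rw [Real.cosh_eq, Real.sinh_eq]; ring
        have hintR : Integrable (fun ω => Real.cosh α + Real.sinh α * G ω) μ :=
          (integrable_const _).add (hGint.const_mul _)
        have hmono := condExp_mono (m := ℱ t) hexpGint hintR hpt
        have hre : μ[fun ω => Real.cosh α + Real.sinh α * G ω|ℱ t] =ᵐ[μ]
            fun _ => Real.cosh α := by
          have hadd : μ[fun ω => Real.cosh α + Real.sinh α * G ω|ℱ t] =ᵐ[μ]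
              μ[fun _ => Real.cosh α|ℱ t] + μ[fun ω => Real.sinh α * G ω|ℱ t] :=
            condExp_add (integrable_const _) (hGint.const_mul _) (ℱ t)
          have hsmul : μ[fun ω => Real.sinh α * G ω|ℱ t] =ᵐ[μ]
              Real.sinh α • μ[G|ℱ t] := by
            have := condExp_smul (μ := μ) (m := ℱ t) (m₀ := m0) (Real.sinh α) G
            exact this
          have hconst : μ[fun _ => Real.cosh α|ℱ t] = fun _ => Real.cosh α :=
            condExp_const (ℱ.le t) _
          filter_upwards [hadd, hsmul, hGmart] with ω h1' h2' h3'
          simp only [Pi.add_apply, Pi.smul_apply, smul_eq_mul] at h1' h2' ⊢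
          rw [h1', h2', h3', hconst]
          simp
        filter_upwards [hmono, hre] with ω h1' h2'
        refine le_trans h1' ?_
        rw [h2']
        exact Real.cosh_le_exp_half_sq α
      -- E[X | ℱ t] ≤ 1
      have hXeq : X = fun ω => 1 + W ω * (Real.exp (α * G ω - α ^ 2 / 2) - 1) := by
        funext ω
        rcases hW01 ω with h | h
        · simp [hXdef, h]
        · rw [hXdef]
          simp only [h, mul_one]
          ring
      set Y : Ω → ℝ := fun ω => Real.exp (α * G ω - α ^ 2 / 2) - 1 with hYdef
      have hYeq : Y = fun ω => Real.exp (-(α ^ 2 / 2)) * Real.exp (α * G ω) - 1 := by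
        funext ω
        rw [hYdef, ← Real.exp_add]
        ring_nf
      have hYint : Integrable Y μ := by
        rw [hYeq]
        exact ((hexpGint.const_mul _).sub (integrable_const 1))
      have hWnorm : ∀ᵐ ω ∂μ, ‖W ω‖ ≤ 1 := by
        refine Filter.Eventually.of_forall fun ω => ?_
        rcases hW01 ω with h | h <;> simp [h]
      have hWY : μ[fun ω => W ω * Y ω|ℱ t] =ᵐ[μ] fun ω => W ω * (μ[Y|ℱ t]) ω := by
        have := condExp_stronglyMeasurable_mul_of_bound (ℱ.le t)
          hWm.stronglyMeasurable hYint 1 hWnorm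
        filter_upwards [this] with ω hω
        exact hω
      have hYcond : μ[Y|ℱ t] ≤ᵐ[μ] fun _ => (0 : ℝ) := by
        have hsub : μ[Y|ℱ t] =ᵐ[μ]
            μ[fun ω => Real.exp (-(α ^ 2 / 2)) * Real.exp (α * G ω)|ℱ t] -
              μ[fun _ => (1 : ℝ)|ℱ t] := by
          have : Y = (fun ω => Real.exp (-(α ^ 2 / 2)) * Real.exp (α * G ω)) -
              fun _ => (1 : ℝ) := by
            rw [hYeq]; rfl
          rw [this]
          exact condExp_sub (hexpGint.const_mul _) (integrable_const 1) (ℱ t)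
        have hsm : μ[fun ω => Real.exp (-(α ^ 2 / 2)) * Real.exp (α * G ω)|ℱ t] =ᵐ[μ]
            Real.exp (-(α ^ 2 / 2)) • μ[fun ω => Real.exp (α * G ω)|ℱ t] := by
          have := condExp_smul (μ := μ) (m := ℱ t) (m₀ := m0)
            (Real.exp (-(α ^ 2 / 2))) (fun ω => Real.exp (α * G ω))
          exact this
        have hconst : μ[fun _ => (1 : ℝ)|ℱ t] = fun _ => (1 : ℝ) :=
          condExp_const (ℱ.le t) _
        filter_upwards [hsub, hsm, hcosh] with ω h1' h2' h3'
        rw [h1']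
        simp only [Pi.sub_apply, hconst]
        rw [h2']
        simp only [Pi.smul_apply, smul_eq_mul]
        have : Real.exp (-(α ^ 2 / 2)) * (μ[fun ω => Real.exp (α * G ω)|ℱ t]) ω ≤
            Real.exp (-(α ^ 2 / 2)) * Real.exp (α ^ 2 / 2) :=
          mul_le_mul_of_nonneg_left h3' (Real.exp_nonneg _)
        rw [← Real.exp_add] at this
        simp only [neg_add_cancel, Real.exp_zero] at this
        linarith
      have hXint : Integrable X μ := by
        rw [hXeq]
        apply (integrable_const (1 + (Real.exp α + 1))).mono'
        · apply AEStronglyMeasurable.add aestronglyMeasurable_const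
          apply AEStronglyMeasurable.mul
            (hWm.mono (ℱ.le t) le_rfl).stronglyMeasurable.aestronglyMeasurable
          exact (((measurable_const.mul hGmeas).sub
            measurable_const).exp.sub measurable_const).aestronglyMeasurable
        · filter_upwards [hGb] with ω hω
          have hE : Real.exp (α * G ω - α ^ 2 / 2) ≤ Real.exp α := by
            apply Real.exp_le_exp.2
            nlinarith [(abs_le.1 hω).2, sq_nonneg α]
          have hE0 : (0 : ℝ) < Real.exp (α * G ω - α ^ 2 / 2) := Real.exp_pos _
          rcases hW01 ω with h | h
          · simp only [h, zero_mul, add_zero, norm_one]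
            nlinarith [Real.exp_pos α]
          · simp only [h, one_mul, Real.norm_eq_abs]
            rw [abs_le]
            constructor <;> nlinarith [Real.exp_pos α]
      have hXcond : μ[X|ℱ t] ≤ᵐ[μ] fun _ => (1 : ℝ) := by
        rw [hXeq]
        have hadd : μ[fun ω => 1 + W ω * Y ω|ℱ t] =ᵐ[μ]
            μ[fun _ => (1 : ℝ)|ℱ t] + μ[fun ω => W ω * Y ω|ℱ t] := by
          have hWYint : Integrable (fun ω => W ω * Y ω) μ := by
            have := hYint.bdd_mul
              ((hWm.mono (ℱ.le t) le_rfl).stronglyMeasurable).aestronglyMeasurable hWnorm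
            simpa using this
          exact condExp_add (integrable_const 1) hWYint (ℱ t)
        have hconst : μ[fun _ => (1 : ℝ)|ℱ t] = fun _ => (1 : ℝ) :=
          condExp_const (ℱ.le t) _
        filter_upwards [hadd, hWY, hYcond] with ω h1' h2' h3'
        simp only [Pi.add_apply] at h1'
        rw [h1', h2', hconst]
        simp only
        have hWpos : 0 ≤ W ω := by rcases hW01 ω with h | h <;> simp [h]
        have : W ω * (μ[Y|ℱ t]) ω ≤ 0 := mul_nonpos_of_nonneg_of_nonpos hWpos h3'
        linarith
      -- Z (t+1) = Z t * X
      have hZsucc : Z (t + 1) = fun ω => Z t ω * X ω := by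
        funext ω
        rw [hZ]
        simp only
        rw [Finset.sum_Icc_succ_top (Nat.succ_le_succ (Nat.zero_le t)), Real.exp_add]
      have hZt1int : Integrable (Z (t + 1)) μ := hZint _ h
      have hmul : μ[Z (t + 1)|ℱ t] =ᵐ[μ] fun ω => Z t ω * (μ[X|ℱ t]) ω := by
        rw [hZsucc]
        have := condExp_stronglyMeasurable_mul_of_bound (ℱ.le t)
          (hZmeas t ht').stronglyMeasurable hXint (Real.exp (α * t)) (hZbdd t ht')
        filter_upwards [this] with ω hω
        exact hω
      have hcondle : μ[Z (t + 1)|ℱ t] ≤ᵐ[μ] Z t := by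
        filter_upwards [hmul, hXcond] with ω h1' h2'
        rw [h1']
        calc Z t ω * (μ[X|ℱ t]) ω ≤ Z t ω * 1 :=
              mul_le_mul_of_nonneg_left h2' (hZpos t ω).le
          _ = Z t ω := mul_one _
      calc ∫ ω, Z (t + 1) ω ∂μ = ∫ ω, (μ[Z (t + 1)|ℱ t]) ω ∂μ :=
            (integral_condExp (ℱ.le t)).symm
        _ ≤ ∫ ω, Z t ω ∂μ := integral_mono_ae integrable_condExp (hZint t ht') hcondle
        _ ≤ 1 := ih ht'
  -- Event inclusion and Markov
  have hsubset : ({ω | α * (∑ t ∈ Icc 1 n, w t ω) < ∑ t ∈ Icc 1 n, w t ω * g t ω} ∩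
      {ω | (m : ℝ) ≤ ∑ t ∈ Icc 1 n, w t ω}) ⊆
      {ω | Real.exp ((m : ℝ) * α ^ 2 / 2) ≤ Z n ω} := by
    rintro ω ⟨h1, h2⟩
    simp only [Set.mem_setOf_eq] at h1 h2 ⊢
    have hsplit : ∑ s ∈ Icc 1 n, (α * w s ω * g s ω - α ^ 2 / 2 * w s ω) =
        α * (∑ t ∈ Icc 1 n, w t ω * g t ω) - α ^ 2 / 2 * ∑ t ∈ Icc 1 n, w t ω := by
      rw [Finset.mul_sum, Finset.mul_sum, ← Finset.sum_sub_distrib]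
      exact Finset.sum_congr rfl fun s _ => by ring
    rw [hZ]
    simp only
    rw [hsplit]
    apply Real.exp_le_exp.2
    set S := ∑ t ∈ Icc 1 n, w t ω
    set T := ∑ t ∈ Icc 1 n, w t ω * g t ω
    have hαT : α * (α * S) ≤ α * T := (mul_le_mul_of_nonneg_left h1.le hα.le)
    nlinarith [sq_nonneg α]
  have hmarkov := mul_meas_ge_le_integral_of_nonneg
    (f := Z n) (Filter.Eventually.of_forall fun ω => (hZpos n ω).le)
    (hZint n le_rfl) (Real.exp ((m : ℝ) * α ^ 2 / 2))
  have hZn := hZone n le_rfl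
  have hεpos : (0 : ℝ) < Real.exp ((m : ℝ) * α ^ 2 / 2) := Real.exp_pos _
  have htoReal : (μ {ω | Real.exp ((m : ℝ) * α ^ 2 / 2) ≤ Z n ω}).toReal ≤
      Real.exp (-(m : ℝ) * α ^ 2 / 2) := by
    have h1 : (μ {ω | Real.exp ((m : ℝ) * α ^ 2 / 2) ≤ Z n ω}).toReal ≤
        1 / Real.exp ((m : ℝ) * α ^ 2 / 2) := by
      rw [le_div_iff₀ hεpos, mul_comm]
      exact le_trans hmarkov hZn
    have h2 : 1 / Real.exp ((m : ℝ) * α ^ 2 / 2) = Real.exp (-(m : ℝ) * α ^ 2 / 2) := by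
      rw [one_div, ← Real.exp_neg]
      congr 1
      ring
    linarith [h1, h2.le]
  calc μ _ ≤ μ {ω | Real.exp ((m : ℝ) * α ^ 2 / 2) ≤ Z n ω} := measure_mono hsubset
    _ = ENNReal.ofReal
        ((μ {ω | Real.exp ((m : ℝ) * α ^ 2 / 2) ≤ Z n ω}).toReal) :=
      (ENNReal.ofReal_toReal (measure_ne_top μ _)).symm
    _ ≤ ENNReal.ofReal (Real.exp (-(m : ℝ) * α ^ 2 / 2)) :=
      ENNReal.ofReal_le_ofReal htoReal

/-- Abstract form of the second part of the technical Lemma: for `k` bounded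
martingale difference sequences with predictable `{0,1}`-valued weights and any
measurable random index `I`, the selected weighted sum concentrates on the event
that the selected sequence has been activated at least `m` times. -/
theorem weighted_azuma_selected_index
    {Ω : Type*} [m0 : MeasurableSpace Ω] (μ : Measure Ω) [IsProbabilityMeasure μ]
    (ℱ : Filtration ℕ m0) (n k : ℕ) (hk : 1 ≤ k)
    (g w : Fin k → ℕ → Ω → ℝ)
    (hgmeas : ∀ j, ∀ t ∈ Icc 1 n, Measurable[ℱ t] (g j t))
    (hgbdd : ∀ j, ∀ t ∈ Icc 1 n, ∀ᵐ ω ∂μ, |g j t ω| ≤ 1)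
    (hgmart : ∀ j, ∀ t ∈ Icc 1 n, μ[g j t|ℱ (t - 1)] =ᵐ[μ] 0)
    (hw01 : ∀ j, ∀ t ∈ Icc 1 n, ∀ ω, w j t ω = 0 ∨ w j t ω = 1)
    (hwmeas : ∀ j, ∀ t ∈ Icc 1 n, Measurable[ℱ (t - 1)] (w j t))
    (I : Ω → Fin k) (hI : Measurable I)
    (α : ℝ) (hα : 0 < α) (m : ℕ) (hm : 1 ≤ m) :
    μ ({ω | α * (∑ t ∈ Icc 1 n, w (I ω) t ω) < |∑ t ∈ Icc 1 n, w (I ω) t ω * g (I ω) t ω|} ∩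
       {ω | (m : ℝ) ≤ ∑ t ∈ Icc 1 n, w (I ω) t ω}) ≤
      ENNReal.ofReal
        (2 * (k : ℝ) * Real.exp (-(m : ℝ) * α ^ 2 / 2) / (1 - Real.exp (-α ^ 2 / 2))) := by
  classical
  set e : ℝ := Real.exp (-(m : ℝ) * α ^ 2 / 2) with he
  set P : Fin k → Set Ω := fun j =>
    {ω | α * (∑ t ∈ Icc 1 n, w j t ω) < ∑ t ∈ Icc 1 n, w j t ω * g j t ω} ∩
    {ω | (m : ℝ) ≤ ∑ t ∈ Icc 1 n, w j t ω} with hP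
  set N : Fin k → Set Ω := fun j =>
    {ω | α * (∑ t ∈ Icc 1 n, w j t ω) < ∑ t ∈ Icc 1 n, w j t ω * (-(g j t ω))} ∩
    {ω | (m : ℝ) ≤ ∑ t ∈ Icc 1 n, w j t ω} with hN
  have hPle : ∀ j, μ (P j) ≤ ENNReal.ofReal e := fun j =>
    aux_one_sided μ ℱ n (g j) (w j) (hgmeas j) (hgbdd j) (hgmart j) (hw01 j) (hwmeas j)
      α hα m
  have hNle : ∀ j, μ (N j) ≤ ENNReal.ofReal e := by
    intro j
    apply aux_one_sided μ ℱ n (fun t ω => -(g j t ω)) (w j)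
      (fun t ht => (hgmeas j t ht).neg)
      (fun t ht => by filter_upwards [hgbdd j t ht] with ω hω; simpa using hω)
      (fun t ht => by
        have h1 := condExp_neg (μ := μ) (m := ℱ (t - 1)) (g j t)
        have h2 := hgmart j t ht
        refine h1.trans ?_
        filter_upwards [h2] with ω hω
        simp [hω])
      (hw01 j) (hwmeas j) α hα m
  have hsubset : ({ω | α * (∑ t ∈ Icc 1 n, w (I ω) t ω) <
        |∑ t ∈ Icc 1 n, w (I ω) t ω * g (I ω) t ω|} ∩
      {ω | (m : ℝ) ≤ ∑ t ∈ Icc 1 n, w (I ω) t ω}) ⊆ ⋃ j, P j ∪ N j := by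
    rintro ω ⟨h1, h2⟩
    simp only [Set.mem_setOf_eq] at h1 h2
    refine Set.mem_iUnion.2 ⟨I ω, ?_⟩
    rcases lt_abs.1 h1 with h | h
    · exact Or.inl ⟨h, h2⟩
    · refine Or.inr ⟨?_, h2⟩
      simp only [Set.mem_setOf_eq, mul_neg]
      rw [Finset.sum_neg_distrib]
      exact h
  have hq1 : Real.exp (-α ^ 2 / 2) < 1 := by
    apply Real.exp_lt_one_iff.2
    have : 0 < α ^ 2 := by positivity
    linarith
  have hq0 : 0 < Real.exp (-α ^ 2 / 2) := Real.exp_pos _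
  have he0 : 0 ≤ e := (Real.exp_pos _).le
  calc μ _ ≤ μ (⋃ j, P j ∪ N j) := measure_mono hsubset
    _ ≤ ∑' j, μ (P j ∪ N j) := measure_iUnion_le _
    _ = ∑ j : Fin k, μ (P j ∪ N j) := tsum_fintype _
    _ ≤ ∑ j : Fin k, (ENNReal.ofReal e + ENNReal.ofReal e) := by
        apply Finset.sum_le_sum
        intro j _
        exact le_trans (measure_union_le _ _) (add_le_add (hPle j) (hNle j))
    _ = (k : ENNReal) * (ENNReal.ofReal e + ENNReal.ofReal e) := by
        rw [Finset.sum_const, Finset.card_univ, Fintype.card_fin, nsmul_eq_mul]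
    _ = ENNReal.ofReal ((k : ℝ) * (2 * e)) := by
        rw [← ENNReal.ofReal_add he0 he0, ← ENNReal.ofReal_natCast k,
          ← ENNReal.ofReal_mul (Nat.cast_nonneg k)]
        congr 1
        ring
    _ ≤ ENNReal.ofReal (2 * (k : ℝ) * e / (1 - Real.exp (-α ^ 2 / 2))) := by
        apply ENNReal.ofReal_le_ofReal
        rw [le_div_iff₀ (by linarith)]
        have hk0 : (0 : ℝ) ≤ (k : ℝ) := Nat.cast_nonneg k
        nlinarith [mul_nonneg hk0 he0, mul_nonneg (mul_nonneg hk0 he0) hq0.le]
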